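/- Let t ∈ (0,1), and for each n let Z_{n,1},…,Z_{n,n} be independent ℝ^d-valued random vectors with Z_{n,j} distributed according to P1 for j ≤ ⌊nt⌋ and according to P2 for j > ⌊nt⌋, where P1, P2 have finite second moments and common covariance matrix Σ. Then lim_{n→∞} n ∫₀¹ E[ ‖Û_n(s) − E Û_n(s)‖² ] ds = tr(Σ)/6. -/

import Mathlib

open MeasureTheory ProbabilityTheory Filter Topology

lemma aux_sum_apply {d n : ℕ} (f : Fin n → EuclideanSpace ℝ (Fin d)) (i : Fin d) :
    (∑ j, f j) i = ∑ j, f j i :=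
  map_sum (EuclideanSpace.projₗ (𝕜 := ℝ) i) f Finset.univ

lemma aux_var {d : ℕ} {Ω : Type} [MeasurableSpace Ω] {P : Measure Ω} [IsProbabilityMeasure P]
    {n : ℕ} {Z : Fin n → Ω → EuclideanSpace ℝ (Fin d)}
    (hindep : iIndepFun Z P)
    (hL2 : ∀ j, MemLp (Z j) 2 P)
    (V : Fin d → ℝ)
    (hvar : ∀ j i, variance (fun ω => Z j ω i) P = V i)
    (a : Fin n → ℝ) :
    ∫ ω, ‖(∑ j, a j • Z j ω) - ∫ ω', (∑ j, a j • Z j ω') ∂P‖ ^ 2 ∂P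
      = (∑ i, V i) * ∑ j, (a j) ^ 2 := by
  set S : Ω → EuclideanSpace ℝ (Fin d) := fun ω => ∑ j, a j • Z j ω with hS
  have hSfun : S = ∑ j, a j • Z j := by
    funext ω; simp [hS, Finset.sum_apply]
  have hSL2 : MemLp S 2 P := by
    rw [hSfun]
    exact memLp_finset_sum' _ (fun j _ => (hL2 j).const_smul (a j))
  have hSint : Integrable S P := hSL2.integrable one_le_two
  have hcoord : ∀ i ω, S ω i = ∑ j, a j * Z j ω i := by
    intro i ω
    show (∑ j, a j • Z j ω) i = _
    rw [aux_sum_apply]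
    simp [PiLp.smul_apply, smul_eq_mul]
  have hXL2 : ∀ (j : Fin n) (i : Fin d), MemLp (fun ω => Z j ω i) 2 P := fun j i =>
    (EuclideanSpace.proj (𝕜 := ℝ) i).comp_memLp' (hL2 j)
  have hSiL2 : ∀ i, MemLp (fun ω => S ω i) 2 P := fun i =>
    (EuclideanSpace.proj (𝕜 := ℝ) i).comp_memLp' hSL2
  have hEc : ∀ i, (∫ ω, S ω ∂P) i = ∫ ω, S ω i ∂P := by
    intro i
    exact ((EuclideanSpace.proj (𝕜 := ℝ) i).integral_comp_comm hSint).symm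
  have hvarSi : ∀ i, variance (fun ω => S ω i) P = (∑ j, (a j)^2) * V i := by
    intro i
    have h1 : (fun ω => S ω i) = ∑ j, (fun ω => a j * Z j ω i) := by
      funext ω
      rw [hcoord i ω, Finset.sum_apply]
    rw [h1, IndepFun.variance_sum]
    · simp_rw [variance_const_mul, hvar, ← Finset.sum_mul]
    · exact fun j _ => (hXL2 j i).const_mul (a j)
    · intro j _ k _ hjk
      exact (hindep.indepFun hjk).comp
        (measurable_const.mul (EuclideanSpace.proj (𝕜 := ℝ) i).continuous.measurable)
        (measurable_const.mul (EuclideanSpace.proj (𝕜 := ℝ) i).continuous.measurable)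
  have hnorm : ∀ x : EuclideanSpace ℝ (Fin d), ‖x‖ ^ 2 = ∑ i, (x i) ^ 2 := by
    intro x
    rw [EuclideanSpace.norm_eq, Real.sq_sqrt (by positivity)]
    simp [sq_abs]
  calc ∫ ω, ‖S ω - ∫ ω', S ω' ∂P‖ ^ 2 ∂P
      = ∫ ω, ∑ i, (S ω i - ∫ ω', S ω' i ∂P) ^ 2 ∂P := by
        congr 1; funext ω
        rw [hnorm]
        congr 1; funext i
        rw [PiLp.sub_apply, hEc]
    _ = ∑ i, ∫ ω, (S ω i - ∫ ω', S ω' i ∂P) ^ 2 ∂P := by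
        refine integral_finset_sum _ (fun i _ => ?_)
        exact ((hSiL2 i).sub (memLp_const _)).integrable_sq
    _ = ∑ i, variance (fun ω => S ω i) P := by
        refine Finset.sum_congr rfl (fun i _ => ?_)
        rw [variance_eq_integral (hSiL2 i).aestronglyMeasurable.aemeasurable]
    _ = (∑ i, V i) * ∑ j, (a j) ^ 2 := by
        simp_rw [hvarSi]
        rw [← Finset.mul_sum, mul_comm]

lemma aux_coord_var {d : ℕ} (Q : Measure (EuclideanSpace ℝ (Fin d))) [IsProbabilityMeasure Q]
    (hQ : MemLp id 2 Q) (μ : EuclideanSpace ℝ (Fin d)) (hμ : μ = ∫ z, z ∂Q)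
    {Ω : Type} [MeasurableSpace Ω] (P : Measure Ω) [IsProbabilityMeasure P]
    (X : Ω → EuclideanSpace ℝ (Fin d)) (hX : Measurable X)
    (hmap : Measure.map X P = Q) (i : Fin d) :
    variance (fun ω => X ω i) P = ∫ z, (z i - μ i) * (z i - μ i) ∂Q := by
  subst hmap
  have hXL2 : MemLp X 2 P :=
    (memLp_map_measure_iff aestronglyMeasurable_id hX.aemeasurable).1 hQ
  have hXiL2 : MemLp (fun ω => X ω i) 2 P :=
    (EuclideanSpace.proj (𝕜 := ℝ) i).comp_memLp' hXL2
  have hproj : AEStronglyMeasurable (fun z : EuclideanSpace ℝ (Fin d) => z i)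
      (Measure.map X P) :=
    ((EuclideanSpace.proj (𝕜 := ℝ) i).continuous.aestronglyMeasurable)
  have hmean : ∫ ω, X ω i ∂P = μ i := by
    have h1 : ∫ ω, X ω i ∂P = ∫ z, z i ∂(Measure.map X P) :=
      (integral_map hX.aemeasurable hproj).symm
    have h2 : ∫ z, z i ∂(Measure.map X P) = μ i := by
      rw [hμ]
      have h := (EuclideanSpace.proj (𝕜 := ℝ) i).integral_comp_comm
        (hQ.integrable one_le_two)
      simp only [id_eq] at h
      exact h
    rw [h1, h2]
  rw [variance_eq_integral hXiL2.aestronglyMeasurable.aemeasurable]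
  have h3 : (fun ω => (X ω i - μ i) * (X ω i - μ i))
      = fun ω => (X ω i - ∫ ω', X ω' i ∂P) ^ 2 := by
    funext ω
    simp [hmean, sq]
  have hm2 : AEStronglyMeasurable (fun z : EuclideanSpace ℝ (Fin d) =>
      (z i - μ i) * (z i - μ i)) (Measure.map X P) :=
    (((EuclideanSpace.proj (𝕜 := ℝ) i).continuous.sub continuous_const).mul
      ((EuclideanSpace.proj (𝕜 := ℝ) i).continuous.sub continuous_const)).aestronglyMeasurable
  rw [← h3, integral_map hX.aemeasurable hm2]

lemma aux_card {n m : ℕ} (hmn : m ≤ n) :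
    (Finset.univ.filter fun j : Fin n => (j : ℕ) < m).card = m := by
  rw [Finset.card_filter]
  rw [Fin.sum_univ_eq_sum_range (fun k => if k < m then 1 else 0) n]
  rw [← Finset.card_filter]
  have h : (Finset.range n).filter (fun k => k < m) = Finset.range m := by
    ext k
    simp only [Finset.mem_filter, Finset.mem_range]
    omega
  rw [h, Finset.card_range]
set_option maxHeartbeats 1000000 in
theorem cusum_integrated_variance_limit
    (d : ℕ) (t : ℝ) (ht0 : 0 < t) (ht1 : t < 1)
    (P1 P2 : Measure (EuclideanSpace ℝ (Fin d)))
    [IsProbabilityMeasure P1] [IsProbabilityMeasure P2]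
    (hP1 : MemLp id 2 P1) (hP2 : MemLp id 2 P2)
    (μ1 μ2 : EuclideanSpace ℝ (Fin d))
    (hμ1 : μ1 = ∫ z, z ∂P1) (hμ2 : μ2 = ∫ z, z ∂P2)
    (Sig : Matrix (Fin d) (Fin d) ℝ)
    (hSig1 : ∀ i j, Sig i j = ∫ z, (z i - μ1 i) * (z j - μ1 j) ∂P1)
    (hSig2 : ∀ i j, Sig i j = ∫ z, (z i - μ2 i) * (z j - μ2 j) ∂P2)
    (Ω : ℕ → Type) (mΩ : ∀ n, MeasurableSpace (Ω n))
    (P : ∀ n, Measure (Ω n)) (hP : ∀ n, IsProbabilityMeasure (P n))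
    (Z : ∀ n : ℕ, Fin n → Ω n → EuclideanSpace ℝ (Fin d))
    (hmeas : ∀ n j, Measurable (Z n j))
    (hindep : ∀ n, iIndepFun (Z n) (P n))
    (hlaw : ∀ n (j : Fin n), Measure.map (Z n j) (P n) =
      if (j : ℕ) < ⌊(n : ℝ) * t⌋₊ then P1 else P2)
    (U : ∀ n : ℕ, ℝ → Ω n → EuclideanSpace ℝ (Fin d))
    (hU : ∀ n s ω, U n s ω =
      ((1 : ℝ) / n) • (∑ j ∈ Finset.univ.filter (fun j : Fin n => (j : ℕ) < ⌊(n : ℝ) * s⌋₊),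
        Z n j ω)
      - (s / n) • (∑ j, Z n j ω)) :
    Tendsto (fun (n : ℕ) => (n : ℝ) *
        ∫ s in (0:ℝ)..1, ∫ ω, ‖U n s ω - ∫ ω', U n s ω' ∂(P n)‖ ^ 2 ∂(P n)) atTop
      (𝓝 (Sig.trace / 6)) := by
  have := hP
  set T : ℝ := ∑ i, Sig i i with hT
  have htrace : Sig.trace = T := rfl
  -- L² bounds for the Z's
  have hZL2 : ∀ n j, MemLp (Z n j) 2 (P n) := by
    intro n j
    haveI := hP n
    have h : MemLp id 2 (Measure.map (Z n j) (P n)) := by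
      rw [hlaw n j]; split_ifs; exacts [hP1, hP2]
    exact (memLp_map_measure_iff aestronglyMeasurable_id (hmeas n j).aemeasurable).1 h
  -- coordinate variances
  have hvarZ : ∀ n (j : Fin n) i, variance (fun ω => Z n j ω i) (P n) = Sig i i := by
    intro n j i
    haveI := hP n
    rcases lt_or_ge (j : ℕ) ⌊(n : ℝ) * t⌋₊ with h | h
    · rw [hSig1 i i]
      exact aux_coord_var P1 hP1 μ1 hμ1 (P n) (Z n j) (hmeas n j)
        (by rw [hlaw n j, if_pos h]) i
    · rw [hSig2 i i]
      exact aux_coord_var P2 hP2 μ2 hμ2 (P n) (Z n j) (hmeas n j)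
        (by rw [hlaw n j, if_neg (not_lt.2 h)]) i
  -- the explicit formula for the inner expectation
  set g : ℕ → ℝ → ℝ := fun n s => T *
    (((⌊(n:ℝ)*s⌋₊ : ℝ) * (1-s)^2 + ((n:ℝ) - (⌊(n:ℝ)*s⌋₊ : ℝ)) * s^2) / (n:ℝ)^2) with hg
  have key : ∀ n : ℕ, 1 ≤ n → ∀ s ∈ Set.uIcc (0:ℝ) 1,
      (∫ ω, ‖U n s ω - ∫ ω', U n s ω' ∂(P n)‖ ^ 2 ∂(P n)) = g n s := by
    intro n hn s hs
    haveI := hP n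
    rw [Set.uIcc_of_le (by norm_num)] at hs
    obtain ⟨hs0, hs1⟩ := hs
    have hnR : (0:ℝ) < n := by exact_mod_cast hn
    set m : ℕ := ⌊(n:ℝ)*s⌋₊ with hm
    have hmn : m ≤ n := by
      have h1 : (n:ℝ)*s ≤ (n:ℝ) := by nlinarith
      calc m ≤ ⌊(n:ℝ)⌋₊ := Nat.floor_mono h1
        _ = n := Nat.floor_natCast n
    set a : Fin n → ℝ := fun j => if (j : ℕ) < m then (1-s)/(n:ℝ) else -s/(n:ℝ) with ha
    have hrep : ∀ ω, U n s ω = ∑ j, a j • Z n j ω := by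
      intro ω
      rw [hU n s ω, Finset.sum_filter, Finset.smul_sum, Finset.smul_sum,
        ← Finset.sum_sub_distrib]
      refine Finset.sum_congr rfl fun j _ => ?_
      by_cases h : (j : ℕ) < m
      · rw [ha]; simp only [← hm, if_pos h, ← sub_smul]
        congr 1; field_simp
      · rw [ha]; simp only [← hm, if_neg h, smul_zero, zero_sub, ← neg_smul, neg_div]
    have hsum : ∑ j, (a j)^2 = ((m:ℝ)*(1-s)^2 + ((n:ℝ)-(m:ℝ))*s^2) / (n:ℝ)^2 := by
      have h1 : ∀ j : Fin n, (a j)^2 = if (j:ℕ) < m then ((1-s)/(n:ℝ))^2 else (s/(n:ℝ))^2 := by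
        intro j
        rw [ha]
        by_cases h : (j : ℕ) < m <;> simp only [if_pos, if_neg, h, if_true, if_false] <;> ring
      simp_rw [h1]
      rw [Finset.sum_ite, Finset.sum_const, Finset.sum_const, aux_card hmn]
      have h2 : (Finset.univ.filter fun j : Fin n => ¬ (j:ℕ) < m).card = n - m := by
        have := Finset.card_filter_add_card_filter_not
          (s := (Finset.univ : Finset (Fin n))) (p := fun j : Fin n => (j:ℕ) < m)
        rw [aux_card hmn, Finset.card_univ, Fintype.card_fin] at this
        omega
      rw [h2]
      have h3 : ((n - m : ℕ) : ℝ) = (n:ℝ) - (m:ℝ) := by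
        push_cast [hmn]; ring
      rw [nsmul_eq_mul, nsmul_eq_mul, h3]
      field_simp
    calc (∫ ω, ‖U n s ω - ∫ ω', U n s ω' ∂(P n)‖ ^ 2 ∂(P n))
        = ∫ ω, ‖(∑ j, a j • Z n j ω) - ∫ ω', (∑ j, a j • Z n j ω') ∂(P n)‖ ^ 2 ∂(P n) := by
          simp_rw [hrep]
      _ = (∑ i, Sig i i) * ∑ j, (a j)^2 :=
          aux_var (hindep n) (hZL2 n) (fun i => Sig i i) (fun j i => hvarZ n j i) a
      _ = g n s := by rw [hsum, hg, hT]
  -- measurability and integrability of g n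
  have hfloor : ∀ n : ℕ, Measurable fun s : ℝ => (⌊(n:ℝ)*s⌋₊ : ℝ) := by
    intro n
    have hmono : Monotone fun s : ℝ => (⌊(n:ℝ)*s⌋₊ : ℝ) := by
      intro x y hxy
      dsimp only
      exact_mod_cast Nat.floor_mono (mul_le_mul_of_nonneg_left hxy (by positivity))
    exact hmono.measurable
  have hgmeas : ∀ n, Measurable (g n) := by
    intro n
    exact measurable_const.mul ((((hfloor n).mul
      ((measurable_const.sub measurable_id).pow_const 2)).add
      ((measurable_const.sub (hfloor n)).mul (measurable_id.pow_const 2))).div_const _)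
  have hgbdd : ∀ n : ℕ, 1 ≤ n → ∀ s ∈ Set.uIoc (0:ℝ) 1, ‖g n s‖ ≤ 2 * |T| := by
    intro n hn s hs
    rw [Set.uIoc_of_le (by norm_num)] at hs
    obtain ⟨hs0, hs1⟩ := hs
    have hnR : (1:ℝ) ≤ n := by exact_mod_cast hn
    have hm1 : (⌊(n:ℝ)*s⌋₊ : ℝ) ≤ (n:ℝ)*s := Nat.floor_le (by positivity)
    have hm0 : (0:ℝ) ≤ (⌊(n:ℝ)*s⌋₊ : ℝ) := by positivity
    have hmn : (⌊(n:ℝ)*s⌋₊ : ℝ) ≤ (n:ℝ) := by nlinarith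
    rw [hg, Real.norm_eq_abs, abs_mul, abs_div]
    have hnum : |(⌊(n:ℝ)*s⌋₊ : ℝ) * (1-s)^2 + ((n:ℝ) - (⌊(n:ℝ)*s⌋₊ : ℝ)) * s^2| ≤ 2 * (n:ℝ)^2 := by
      rw [abs_le]
      constructor <;> nlinarith [sq_nonneg (1-s), sq_nonneg s, sq_nonneg ((n:ℝ))]
    have hden : |((n:ℝ)^2)| = (n:ℝ)^2 := abs_of_nonneg (by positivity)
    rw [hden]
    calc |T| * (|(⌊(n:ℝ)*s⌋₊ : ℝ) * (1-s)^2 + ((n:ℝ) - (⌊(n:ℝ)*s⌋₊ : ℝ)) * s^2| / (n:ℝ)^2)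
        ≤ |T| * (2 * (n:ℝ)^2 / (n:ℝ)^2) := by
          gcongr
      _ = 2 * |T| := by
          field_simp
  have hgint : ∀ n : ℕ, 1 ≤ n → IntervalIntegrable (g n) MeasureTheory.volume 0 1 := by
    intro n hn
    rw [intervalIntegrable_iff]
    haveI : Fact (MeasureTheory.volume (Set.uIoc (0:ℝ) 1) < ⊤) :=
      ⟨by rw [Set.uIoc_of_le (by norm_num : (0:ℝ) ≤ 1)]; exact measure_Ioc_lt_top⟩
    refine (integrable_const (2*|T|)).mono' ((hgmeas n).aestronglyMeasurable.restrict) ?_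
    refine (ae_restrict_iff' measurableSet_uIoc).2 (ae_of_all _ fun s hs => ?_)
    exact hgbdd n hn s hs
  -- pointwise bound for the integrand difference
  have hbound : ∀ n : ℕ, 1 ≤ n → ∀ s ∈ Set.uIoc (0:ℝ) 1,
      ‖(n:ℝ) * g n s - T * (s - s^2)‖ ≤ |T| / n := by
    intro n hn s hs
    rw [Set.uIoc_of_le (by norm_num)] at hs
    obtain ⟨hs0, hs1⟩ := hs
    have hnR : (1:ℝ) ≤ n := by exact_mod_cast hn
    have hn0 : (n:ℝ) ≠ 0 := by positivity
    obtain ⟨M, hM⟩ : ∃ M : ℝ, (⌊(n:ℝ)*s⌋₊ : ℝ) = M := ⟨_, rfl⟩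
    have hm1 : M ≤ (n:ℝ)*s := hM ▸ Nat.floor_le (by positivity)
    have hm2 : (n:ℝ)*s < M + 1 := hM ▸ Nat.lt_floor_add_one _
    have hid : (n:ℝ) * g n s - T * (s - s^2) = T * ((M - (n:ℝ)*s)*(1-2*s)) / n := by
      rw [hg]
      simp only [hM]
      field_simp
      ring
    rw [hid, Real.norm_eq_abs, abs_div, abs_mul, abs_mul, abs_of_nonneg (show (0:ℝ) ≤ (n:ℝ) by positivity)]
    have h1 : |M - (n:ℝ)*s| ≤ 1 := abs_le.2 ⟨by linarith, by linarith⟩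
    have h2 : |1 - 2*s| ≤ 1 := abs_le.2 ⟨by linarith, by linarith⟩
    calc |T| * (|M - (n:ℝ)*s| * |1-2*s|) / (n:ℝ)
        ≤ |T| * (1 * 1) / (n:ℝ) := by gcongr
      _ = |T| / n := by ring
  -- the limit integral
  have hTsix : ∫ s in (0:ℝ)..1, T * (s - s^2) = T / 6 := by
    rw [intervalIntegral.integral_const_mul]
    have h1 : ∫ s in (0:ℝ)..1, (s - s^2) = 1/6 := by
      rw [intervalIntegral.integral_sub intervalIntegral.intervalIntegrable_id
        ((continuous_pow 2).intervalIntegrable 0 1), integral_id, integral_pow]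
      norm_num
    rw [h1]
    ring
  have hpoly : IntervalIntegrable (fun s : ℝ => T * (s - s^2)) MeasureTheory.volume 0 1 :=
    (continuous_const.mul (continuous_id.sub (continuous_pow 2))).intervalIntegrable 0 1
  -- final bound
  have hfinal : ∀ n : ℕ, 1 ≤ n →
      ‖(n:ℝ) * (∫ s in (0:ℝ)..1, ∫ ω, ‖U n s ω - ∫ ω', U n s ω' ∂(P n)‖ ^ 2 ∂(P n)) - T/6‖
        ≤ |T| / n := by
    intro n hn
    have h1 : (∫ s in (0:ℝ)..1, ∫ ω, ‖U n s ω - ∫ ω', U n s ω' ∂(P n)‖ ^ 2 ∂(P n))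
        = ∫ s in (0:ℝ)..1, g n s :=
      intervalIntegral.integral_congr (key n hn)
    rw [h1, ← intervalIntegral.integral_const_mul, ← hTsix,
      ← intervalIntegral.integral_sub ((hgint n hn).const_mul _) hpoly]
    have h2 := intervalIntegral.norm_integral_le_of_norm_le_const
      (C := |T| / n) (f := fun s => (n:ℝ) * g n s - T * (s - s^2)) (a := 0) (b := 1)
      (fun s hs => hbound n hn s hs)
    simpa using h2
  -- conclude
  rw [htrace]
  have hz : Tendsto (fun n : ℕ => (n:ℝ) *
      (∫ s in (0:ℝ)..1, ∫ ω, ‖U n s ω - ∫ ω', U n s ω' ∂(P n)‖ ^ 2 ∂(P n)) - T/6)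
      atTop (𝓝 0) := by
    refine squeeze_zero_norm' ?_ (tendsto_const_div_atTop_nhds_zero_nat |T|)
    filter_upwards [eventually_ge_atTop 1] with n hn
    exact hfinal n hn
  have := hz.add (tendsto_const_nhds (x := T/6) (f := atTop))
  simpa using this
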